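/- arXiv:2004.13234 — 2 statements merged into one kernel-verified Lean document; each statement's English description precedes it below -/
import Mathlib

section
/- Let E be a finite-dimensional complex inner product space, H : E → E a self-adjoint linear operator, and v₀ ∈ E a unit vector. Define recursively, for j ≥ 0: a_j := ⟨v_j, H v_j⟩, w_{j+1} := H v_j − a_j v_j − b_j v_{j−1} (with the conventions v_{−1} := 0 and b₀ := 0), b_{j+1} := ‖w_{j+1}‖, and v_{j+1} := w_{j+1}/b_{j+1} whenever b_{j+1} ≠ 0. If b_j ≠ 0 for all 1 ≤ j ≤ L, then the Lanczos vectors v₀, v₁, …, v_L are orthonormal: ⟨v_i, v_j⟩ = δ_{ij} for all 0 ≤ i, j ≤ L. -/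
/-- Orthonormality of the Lanczos vectors: given a self-adjoint (symmetric)
operator `H` on a finite-dimensional complex inner product space, a unit vector
`v₀`, and the three-term Lanczos recurrence
`w_{j+1} = H v_j − ⟨v_j, H v_j⟩ v_j − b_j v_{j−1}` (with `v_{−1} = 0`, `b₀ = 0`),
`b_{j+1} = ‖w_{j+1}‖`, `v_{j+1} = w_{j+1}/b_{j+1}`, if `b_j ≠ 0` for all
`1 ≤ j ≤ L`, then `v₀, …, v_L` are orthonormal. -/
theorem lanczos_orthonormal {E : Type*} [NormedAddCommGroup E] [InnerProductSpace ℂ E]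
    [FiniteDimensional ℂ E] (H : E →ₗ[ℂ] E) (hH : H.IsSymmetric)
    (L : ℕ) (v w : ℕ → E) (b : ℕ → ℝ)
    (hv0 : ‖v 0‖ = 1) (hb0 : b 0 = 0)
    (hw : ∀ j : ℕ, w (j + 1) =
      H (v j) - (inner ℂ (v j) (H (v j)) : ℂ) • v j
        - ((b j : ℂ)) • (if j = 0 then (0 : E) else v (j - 1)))
    (hb : ∀ j : ℕ, b (j + 1) = ‖w (j + 1)‖)
    (hv : ∀ j : ℕ, j < L → v (j + 1) = ((b (j + 1) : ℂ))⁻¹ • w (j + 1))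
    (hbne : ∀ j : ℕ, 1 ≤ j → j ≤ L → b j ≠ 0) :
    ∀ i ≤ L, ∀ j ≤ L, (inner ℂ (v i) (v j) : ℂ) = if i = j then 1 else 0 := by
  -- expansion of `H (v i)` in terms of the Lanczos vectors
  have hHv : ∀ i, i < L → H (v i) =
      (b (i+1) : ℂ) • v (i+1) + (inner ℂ (v i) (H (v i)) : ℂ) • v i
        + (b i : ℂ) • (if i = 0 then (0 : E) else v (i - 1)) := by
    intro i hiL
    have hb1 : (b (i+1) : ℂ) ≠ 0 := by
      exact_mod_cast hbne (i+1) (Nat.succ_le_succ (Nat.zero_le i)) hiL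
    have hwv : (b (i+1) : ℂ) • v (i+1) = w (i+1) := by
      rw [hv i hiL, smul_smul, mul_inv_cancel₀ hb1, one_smul]
    rw [hwv, hw i]
    abel
  suffices key : ∀ k, k ≤ L → ∀ i ≤ k, ∀ j ≤ k,
      (inner ℂ (v i) (v j) : ℂ) = if i = j then 1 else 0 by
    intro i hi j hj
    exact key L le_rfl i hi j hj
  intro k
  induction k with
  | zero =>
    intro _ i hi j hj
    have hi0 : i = 0 := Nat.le_zero.mp hi
    have hj0 : j = 0 := Nat.le_zero.mp hj
    subst hi0; subst hj0
    simp only [if_pos rfl]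
    rw [inner_self_eq_norm_sq_to_K, hv0]
    norm_num
  | succ k ih =>
    intro hk1
    have hkL : k ≤ L := Nat.le_of_succ_le hk1
    have IH := ih hkL
    have hbk1 : b (k+1) ≠ 0 := hbne (k+1) (Nat.succ_le_succ (Nat.zero_le k)) hk1
    have hbk1C : (b (k+1) : ℂ) ≠ 0 := by exact_mod_cast hbk1
    have hvk1 : v (k+1) = ((b (k+1) : ℂ))⁻¹ • w (k+1) := hv k (Nat.lt_of_succ_le hk1)
    -- core orthogonality
    have horth : ∀ i ≤ k, (inner ℂ (v i) (w (k+1)) : ℂ) = 0 := by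
      intro i hi
      rcases eq_or_lt_of_le hi with rfl | hik
      · -- i = k
        have hT : (inner ℂ (v i) ((b i : ℂ) • (if i = 0 then (0:E) else v (i-1))) : ℂ) = 0 := by
          rcases Nat.eq_zero_or_pos i with rfl | hpos
          · simp [hb0]
          · rw [if_neg (show ¬ i = 0 by omega), inner_smul_right,
              IH i le_rfl (i-1) (by omega), if_neg (show ¬ i = i - 1 by omega), mul_zero]
        rw [hw i, inner_sub_right, inner_sub_right, inner_smul_right,
          IH i le_rfl i le_rfl, if_pos rfl, hT]
        ring
      · -- i < k
        have hiL : i < L := lt_of_lt_of_le hik hkL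
        have hk0 : ¬ k = 0 := by omega
        have hT : (inner ℂ ((b i : ℂ) • (if i = 0 then (0:E) else v (i-1))) (v k) : ℂ) = 0 := by
          rcases Nat.eq_zero_or_pos i with rfl | hpos
          · simp [hb0]
          · rw [if_neg (show ¬ i = 0 by omega), inner_smul_left,
              IH (i-1) (by omega) k le_rfl, if_neg (show ¬ i - 1 = k by omega), mul_zero]
        rw [hw k, inner_sub_right, inner_sub_right, inner_smul_right, inner_smul_right,
          ← hH (v i) (v k), hHv i hiL, inner_add_left, inner_add_left,
          inner_smul_left, inner_smul_left, hT, if_neg hk0,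
          IH i hik.le k le_rfl, if_neg hik.ne,
          IH (i+1) (by omega) k le_rfl, IH i hik.le (k-1) (by omega),
          Complex.conj_ofReal]
        have hiff : (i = k - 1) ↔ (i + 1 = k) := by omega
        simp only [hiff]
        by_cases h1 : i + 1 = k
        · rw [if_pos h1, h1]; ring
        · rw [if_neg h1]; ring
    have horth' : ∀ i ≤ k, (inner ℂ (v i) (v (k+1)) : ℂ) = 0 := by
      intro i hi
      rw [hvk1, inner_smul_right, horth i hi, mul_zero]
    have hnorm : (inner ℂ (v (k+1)) (v (k+1)) : ℂ) = 1 := by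
      rw [hvk1, inner_smul_right, inner_smul_left, inner_self_eq_norm_sq_to_K,
        ← hb (k), map_inv₀, Complex.conj_ofReal]
      field_simp
      rfl
    intro i hi j hj
    rcases Nat.lt_succ_iff_lt_or_eq.mp (Nat.lt_succ_of_le hi) with hi' | rfl
    · rcases Nat.lt_succ_iff_lt_or_eq.mp (Nat.lt_succ_of_le hj) with hj' | rfl
      · exact IH i (Nat.lt_succ_iff.mp hi') j (Nat.lt_succ_iff.mp hj')
      · rw [horth' i (Nat.lt_succ_iff.mp hi'), if_neg (by omega)]
    · rcases Nat.lt_succ_iff_lt_or_eq.mp (Nat.lt_succ_of_le hj) with hj' | rfl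
      · rw [← inner_conj_symm, horth' j (Nat.lt_succ_iff.mp hj'), if_neg (by omega)]
        simp
      · rw [hnorm, if_pos rfl]
end

section
/- Let E be a finite-dimensional complex inner product space, H : E → E a self-adjoint linear operator, and v₀ ∈ E a unit vector such that H^l v₀ ≠ 0 for all 0 ≤ l ≤ L. Define n_l := 1/‖H^l v₀‖ and v_l := n_l · H^l v₀. Then for all 0 ≤ l, l' ≤ L with l + l' even, writing r := (l + l')/2, the overlap and Hamiltonian matrices in this Krylov basis satisfy S_{l,l'} := ⟨v_l, v_{l'}⟩ = n_l n_{l'} / n_r² and H_{l,l'} := ⟨v_l, H v_{l'}⟩ = (n_l n_{l'} / n_r²) · ⟨v_r, H v_r⟩. -/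
lemma qli_aux {E : Type*} [NormedAddCommGroup E] [InnerProductSpace ℂ E]
    (H : E →ₗ[ℂ] E) (hH : H.IsSymmetric) (v₀ : E) (l l' r : ℕ)
    (hr : l + l' = 2 * r) :
    (inner ℂ ((H ^ l) v₀) ((H ^ l') v₀) : ℂ) = inner ℂ ((H ^ r) v₀) ((H ^ r) v₀) := by
  have h1 : (inner ℂ ((H ^ l) v₀) ((H ^ l') v₀) : ℂ) = inner ℂ v₀ ((H ^ (l + l')) v₀) := by
    rw [hH.pow l, pow_add]; rfl
  have h2 : (inner ℂ ((H ^ r) v₀) ((H ^ r) v₀) : ℂ) = inner ℂ v₀ ((H ^ (r + r)) v₀) := by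
    rw [hH.pow r, pow_add]; rfl
  rw [h1, h2, hr, two_mul]

/-- The quantum Lanczos identities: for a self-adjoint operator `H` on a
finite-dimensional complex inner product space and a unit vector `v₀` with
`H^l v₀ ≠ 0` for `0 ≤ l ≤ L`, set `n_l = 1/‖H^l v₀‖` and
`v_l = n_l · H^l v₀`. Then for `0 ≤ l, l' ≤ L` with `l + l'` even and
`r = (l + l')/2`, the overlap and Hamiltonian matrices satisfy
`S_{l,l'} = ⟨v_l, v_{l'}⟩ = n_l n_{l'}/n_r²` and
`H_{l,l'} = ⟨v_l, H v_{l'}⟩ = (n_l n_{l'}/n_r²)·⟨v_r, H v_r⟩`. -/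
theorem quantum_lanczos_identities {E : Type*} [NormedAddCommGroup E]
    [InnerProductSpace ℂ E] [FiniteDimensional ℂ E]
    (H : E →ₗ[ℂ] E) (hH : H.IsSymmetric)
    (L : ℕ) (v₀ : E) (hv₀ : ‖v₀‖ = 1)
    (hne : ∀ l : ℕ, l ≤ L → (H ^ l) v₀ ≠ 0)
    (n : ℕ → ℝ) (hn : ∀ l : ℕ, n l = 1 / ‖(H ^ l) v₀‖)
    (v : ℕ → E) (hv : ∀ l : ℕ, v l = n l • (H ^ l) v₀) :
    ∀ l l' : ℕ, l ≤ L → l' ≤ L → ∀ r : ℕ, l + l' = 2 * r →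
      (inner ℂ (v l) (v l') : ℂ) = ((n l * n l' / (n r) ^ 2 : ℝ) : ℂ) ∧
      (inner ℂ (v l) (H (v l')) : ℂ) =
        ((n l * n l' / (n r) ^ 2 : ℝ) : ℂ) * (inner ℂ (v r) (H (v r)) : ℂ) := by
  intro l l' hl hl' r hr
  have hrL : r ≤ L := by omega
  have hnorm : ‖(H ^ r) v₀‖ ≠ 0 := norm_ne_zero_iff.mpr (hne r hrL)
  have hnr : n r ≠ 0 := by rw [hn r]; positivity
  have hinv : (n l * n l' / (n r) ^ 2 : ℝ) = n l * n l' * ‖(H ^ r) v₀‖ ^ 2 := by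
    rw [hn r]; field_simp
  have hsm : ∀ (a : ℝ) (x : E), a • x = (a : ℂ) • x := fun a x =>
    RCLike.real_smul_eq_coe_smul (K := ℂ) a x
  constructor
  · rw [hv l, hv l', hsm, hsm, inner_smul_left, inner_smul_right,
      qli_aux H hH v₀ l l' r hr, inner_self_eq_norm_sq_to_K, hinv]
    push_cast [Complex.conj_ofReal]
    rw [mul_assoc]
    rfl
  · have key : (inner ℂ ((H ^ l) v₀) (H ((H ^ l') v₀)) : ℂ)
        = inner ℂ ((H ^ r) v₀) (H ((H ^ r) v₀)) := by
      have h1 : ∀ a b : ℕ, (inner ℂ ((H ^ a) v₀) (H ((H ^ b) v₀)) : ℂ)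
          = inner ℂ v₀ ((H ^ (a + b + 1)) v₀) := by
        intro a b
        have hb : H ((H ^ b) v₀) = (H ^ (b + 1)) v₀ := by
          rw [pow_succ']; rfl
        rw [hb, hH.pow a, ← LinearMap.comp_apply, ← Module.End.mul_eq_comp,
          ← pow_add, add_assoc]
      rw [h1, h1]
      have : l + l' + 1 = r + r + 1 := by omega
      rw [this]
    rw [hv l, hv l', hv r, hsm, hsm, hsm, map_smul, map_smul,
      inner_smul_left, inner_smul_right, inner_smul_left, inner_smul_right,
      key, hinv]
    push_cast [Complex.conj_ofReal]
    have hnr' : ((n r : ℂ)) ≠ 0 := by exact_mod_cast hnr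
    have hn2 : (n r : ℝ) ^ 2 * ‖(H ^ r) v₀‖ ^ 2 = 1 := by
      rw [hn r]; field_simp
    have hn2c : ((n r : ℂ)) ^ 2 * ((‖(H ^ r) v₀‖ : ℂ)) ^ 2 = 1 := by
      exact_mod_cast congrArg (Complex.ofReal ·) hn2
    set I := (inner ℂ ((H ^ r) v₀) (H ((H ^ r) v₀)) : ℂ)
    calc (n l : ℂ) * ((n l' : ℂ) * I)
        = ((n l : ℂ) * (n l' : ℂ) * I) * (((n r : ℂ)) ^ 2 * ((‖(H ^ r) v₀‖ : ℂ)) ^ 2) := by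
          rw [hn2c]; ring
      _ = (n l : ℂ) * (n l' : ℂ) * ((‖(H ^ r) v₀‖ : ℂ)) ^ 2 * ((n r : ℂ) * ((n r : ℂ) * I)) := by
          ring
end
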